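/- (S-lemma) Let M, N ∈ 𝕊^n and suppose there exists x̄ ∈ ℝ^n with x̄ᵀ N x̄ > 0. Then xᵀ M x > 0 for all nonzero x ∈ ℝ^n with xᵀ N x ≥ 0, if and only if there exists α ≥ 0 such that M - αN ≻ 0. -/

import Mathlib

open Matrix

section SLemmaAux

variable {n : ℕ}

/-- The quadratic form of a matrix. -/
private def qf (A : Matrix (Fin n) (Fin n) ℝ) (x : Fin n → ℝ) : ℝ := x ⬝ᵥ (A *ᵥ x)

private lemma bilin_symm {A : Matrix (Fin n) (Fin n) ℝ} (hA : A.IsSymm) (x y : Fin n → ℝ) :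
    x ⬝ᵥ (A *ᵥ y) = y ⬝ᵥ (A *ᵥ x) := by
  rw [dotProduct_mulVec, ← mulVec_transpose, hA.eq, dotProduct_comm]

private lemma qf_expand {A : Matrix (Fin n) (Fin n) ℝ} (hA : A.IsSymm) (a b : ℝ)
    (x y : Fin n → ℝ) :
    qf A (a • x + b • y) = a^2 * qf A x + 2*a*b * (x ⬝ᵥ (A *ᵥ y)) + b^2 * qf A y := by
  simp only [qf, mulVec_add, mulVec_smul, dotProduct_add, add_dotProduct, dotProduct_smul,
    smul_dotProduct, smul_eq_mul]
  rw [bilin_symm hA y x]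
  ring

private lemma qf_smul (A : Matrix (Fin n) (Fin n) ℝ) (c : ℝ) (x : Fin n → ℝ) :
    qf A (c • x) = c^2 * qf A x := by
  simp only [qf, mulVec_smul, dotProduct_smul, smul_dotProduct, smul_eq_mul]; ring

private lemma qf_continuous (A : Matrix (Fin n) (Fin n) ℝ) : Continuous (qf A) := by
  unfold qf dotProduct mulVec
  simp only [dotProduct]
  fun_prop

private lemma qf_zero (A : Matrix (Fin n) (Fin n) ℝ) : qf A 0 = 0 := by
  simp [qf]

private lemma dp_self_pos {v : Fin n → ℝ} (hv : v ≠ 0) : 0 < v ⬝ᵥ v := by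
  have h1 : 0 ≤ v ⬝ᵥ v := Finset.sum_nonneg fun i _ => mul_self_nonneg (v i)
  rcases h1.lt_or_eq with h | h
  · exact h
  · exact absurd (dotProduct_self_eq_zero.mp h.symm) hv

/-- Yuan's lemma (nonstrict): if `max(xᵀAx, xᵀBx) ≥ 0` for all `x`, then some convex
combination of the two quadratic forms is everywhere nonnegative. -/
private lemma yuan_nonstrict {A B : Matrix (Fin n) (Fin n) ℝ} (hA : A.IsSymm) (hB : B.IsSymm)
    (h : ∀ x : Fin n → ℝ, 0 ≤ max (qf A x) (qf B x)) :
    ∃ l : ℝ, l ∈ Set.Icc (0:ℝ) 1 ∧ ∀ x : Fin n → ℝ, 0 ≤ l * qf A x + (1 - l) * qf B x := by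
  by_contra hcon
  push_neg at hcon
  have key : ∀ l ∈ Set.Icc (0:ℝ) 1, ∃ x, l * qf A x + (1 - l) * qf B x < 0 := by
    intro l hl
    obtain ⟨x, hx⟩ := hcon l hl
    exact ⟨x, hx⟩
  -- the two open sets splitting [0,1]
  set u : Set ℝ := {l | ∃ x, l * qf A x + (1 - l) * qf B x < 0 ∧ qf A x < 0} with hu_def
  set v : Set ℝ := {l | ∃ x, l * qf A x + (1 - l) * qf B x < 0 ∧ qf B x < 0} with hv_def
  have hu_open : IsOpen u := by
    rw [hu_def, Set.setOf_exists]
    apply isOpen_iUnion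
    intro x
    by_cases hx : qf A x < 0
    · have : {l : ℝ | l * qf A x + (1 - l) * qf B x < 0 ∧ qf A x < 0}
          = {l : ℝ | l * qf A x + (1 - l) * qf B x < 0} := by
        ext l; simp [hx]
      rw [this]
      exact isOpen_lt (by fun_prop) continuous_const
    · have : {l : ℝ | l * qf A x + (1 - l) * qf B x < 0 ∧ qf A x < 0} = ∅ := by
        ext l; simp [hx]
      rw [this]; exact isOpen_empty
  have hv_open : IsOpen v := by
    rw [hv_def, Set.setOf_exists]
    apply isOpen_iUnion
    intro x
    by_cases hx : qf B x < 0
    · have : {l : ℝ | l * qf A x + (1 - l) * qf B x < 0 ∧ qf B x < 0}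
          = {l : ℝ | l * qf A x + (1 - l) * qf B x < 0} := by
        ext l; simp [hx]
      rw [this]
      exact isOpen_lt (by fun_prop) continuous_const
    · have : {l : ℝ | l * qf A x + (1 - l) * qf B x < 0 ∧ qf B x < 0} = ∅ := by
        ext l; simp [hx]
      rw [this]; exact isOpen_empty
  have hcover : Set.Icc (0:ℝ) 1 ⊆ u ∪ v := by
    intro l hl
    obtain ⟨x, hx⟩ := key l hl
    rcases lt_or_ge (qf A x) 0 with hAx | hAx
    · exact Or.inl ⟨x, hx, hAx⟩
    · rcases lt_or_ge (qf B x) 0 with hBx | hBx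
      · exact Or.inr ⟨x, hx, hBx⟩
      · exfalso
        have h1 : 0 ≤ l * qf A x := mul_nonneg hl.1 hAx
        have h2 : 0 ≤ (1 - l) * qf B x := mul_nonneg (by linarith [hl.2]) hBx
        linarith
  have hune : (Set.Icc (0:ℝ) 1 ∩ u).Nonempty := by
    obtain ⟨x, hx⟩ := key 1 (by norm_num)
    refine ⟨1, by norm_num, ⟨x, hx, ?_⟩⟩
    simpa using hx
  have hvne : (Set.Icc (0:ℝ) 1 ∩ v).Nonempty := by
    obtain ⟨x, hx⟩ := key 0 (by norm_num)
    refine ⟨0, by norm_num, ⟨x, hx, ?_⟩⟩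
    simpa using hx
  obtain ⟨l, hl, ⟨x, hx, hAx⟩, ⟨y, hy, hBy⟩⟩ :=
    isPreconnected_Icc u v hu_open hv_open hcover hune hvne
  -- from the hypothesis, the other forms are nonnegative at x, y
  have hBx : 0 ≤ qf B x := by
    have := h x
    rcases le_max_iff.mp this with h' | h'
    · linarith
    · exact h'
  have hAy : 0 ≤ qf A y := by
    have := h y
    rcases le_max_iff.mp this with h' | h'
    · exact h'
    · linarith
  -- choose a sign so the mixed cross term is nonpositive
  set c : ℝ := l * (x ⬝ᵥ (A *ᵥ y)) + (1 - l) * (x ⬝ᵥ (B *ᵥ y)) with hc_def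
  set s : ℝ := if c ≤ 0 then 1 else -1 with hs_def
  have hs_sq : s^2 = 1 := by
    rw [hs_def]; split <;> norm_num
  have hsc : s * c ≤ 0 := by
    rw [hs_def]; split
    · simpa
    · push_neg at *; nlinarith
  set y' : Fin n → ℝ := s • y with hy'_def
  have hAy' : qf A y' = qf A y := by rw [hy'_def, qf_smul, hs_sq, one_mul]
  have hBy' : qf B y' = qf B y := by rw [hy'_def, qf_smul, hs_sq, one_mul]
  have hcross : l * (x ⬝ᵥ (A *ᵥ y')) + (1 - l) * (x ⬝ᵥ (B *ᵥ y')) = s * c := by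
    rw [hy'_def, hc_def]
    simp only [mulVec_smul, dotProduct_smul, smul_eq_mul]
    ring
  -- the path from y' to x
  set z : ℝ → (Fin n → ℝ) := fun t => t • x + (1 - t) • y' with hz_def
  have hz_val : ∀ t : ℝ, l * qf A (z t) + (1 - l) * qf B (z t)
      = t^2 * (l * qf A x + (1 - l) * qf B x)
        + 2*t*(1-t) * (s * c)
        + (1-t)^2 * (l * qf A y' + (1 - l) * qf B y') := by
    intro t
    rw [hz_def]
    simp only
    rw [qf_expand hA, qf_expand hB, ← hcross]
    ring
  have hzneg : ∀ t ∈ Set.Icc (0:ℝ) 1, l * qf A (z t) + (1 - l) * qf B (z t) < 0 := by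
    intro t ht
    rw [hz_val t]
    have h1 : 0 ≤ t := ht.1
    have h2 : t ≤ 1 := ht.2
    have hpx : l * qf A x + (1 - l) * qf B x < 0 := hx
    have hpy : l * qf A y' + (1 - l) * qf B y' < 0 := by rw [hAy', hBy']; exact hy
    have hmid : 2*t*(1-t)*(s*c) ≤ 0 := by
      have h3 : 0 ≤ t * (1 - t) := mul_nonneg h1 (by linarith)
      nlinarith
    rcases h1.lt_or_eq with h1' | h1'
    · have ht2 : 0 < t^2 := pow_pos h1' 2
      have term1 : t^2 * (l * qf A x + (1 - l) * qf B x) < 0 := mul_neg_of_pos_of_neg ht2 hpx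
      have term3 : (1-t)^2 * (l * qf A y' + (1 - l) * qf B y') ≤ 0 :=
        mul_nonpos_of_nonneg_of_nonpos (sq_nonneg _) hpy.le
      linarith
    · rw [← h1']
      norm_num
      linarith
  -- inner connectedness argument along the path
  set U : Set ℝ := {t | qf A (z t) < 0} with hU_def
  set V : Set ℝ := {t | qf B (z t) < 0} with hV_def
  have hzc : Continuous z := by rw [hz_def]; fun_prop
  have hU_open : IsOpen U := isOpen_lt ((qf_continuous A).comp hzc) continuous_const
  have hV_open : IsOpen V := isOpen_lt ((qf_continuous B).comp hzc) continuous_const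
  have hcover2 : Set.Icc (0:ℝ) 1 ⊆ U ∪ V := by
    intro t ht
    have := hzneg t ht
    by_contra hcon2
    simp only [Set.mem_union, hU_def, hV_def, Set.mem_setOf_eq] at hcon2
    push_neg at hcon2
    have h1 : 0 ≤ l * qf A (z t) := mul_nonneg hl.1 hcon2.1
    have h2 : 0 ≤ (1 - l) * qf B (z t) := mul_nonneg (by linarith [hl.2]) hcon2.2
    linarith
  have hUne : (Set.Icc (0:ℝ) 1 ∩ U).Nonempty := by
    refine ⟨1, by norm_num, ?_⟩
    have : z 1 = x := by rw [hz_def]; simp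
    simp only [hU_def, Set.mem_setOf_eq, this]
    exact hAx
  have hVne : (Set.Icc (0:ℝ) 1 ∩ V).Nonempty := by
    refine ⟨0, by norm_num, ?_⟩
    have : z 0 = y' := by rw [hz_def]; simp
    simp only [hV_def, Set.mem_setOf_eq, this, hBy']
    exact hBy
  obtain ⟨t, _, htU, htV⟩ := isPreconnected_Icc U V hU_open hV_open hcover2 hUne hVne
  have := h (z t)
  rcases le_max_iff.mp this with h' | h'
  · exact absurd h' (not_le.mpr htU)
  · exact absurd h' (not_le.mpr htV)

/-- Yuan's lemma, strict version. -/
private lemma yuan_strict {A B : Matrix (Fin n) (Fin n) ℝ} (hA : A.IsSymm) (hB : B.IsSymm)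
    (h : ∀ x : Fin n → ℝ, x ≠ 0 → 0 < max (qf A x) (qf B x)) :
    ∃ l : ℝ, l ∈ Set.Icc (0:ℝ) 1 ∧
      ∀ x : Fin n → ℝ, x ≠ 0 → 0 < l * qf A x + (1 - l) * qf B x := by
  rcases Nat.eq_zero_or_pos n with hn | hn
  · refine ⟨1, by norm_num, fun x hx => ?_⟩
    exfalso
    exact hx (funext fun i => absurd i.2 (by omega))
  -- the unit sphere is compact and nonempty
  set S : Set (Fin n → ℝ) := {x | x ⬝ᵥ x = 1} with hS_def
  have hS_closed : IsClosed S := by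
    have : Continuous fun x : Fin n → ℝ => x ⬝ᵥ x := by
      simp only [dotProduct]; fun_prop
    exact isClosed_eq this continuous_const
  have hS_sub : S ⊆ Metric.closedBall 0 1 := by
    intro x hx
    simp only [Metric.mem_closedBall, dist_zero_right]
    rw [pi_norm_le_iff_of_nonneg (by norm_num)]
    intro i
    rw [Real.norm_eq_abs]
    apply abs_le_one_iff_mul_self_le_one.2
    calc x i * x i ≤ ∑ j, x j * x j :=
          Finset.single_le_sum (fun j _ => mul_self_nonneg (x j)) (Finset.mem_univ i)
      _ = 1 := hx
  have hS_cpt : IsCompact S := (isCompact_closedBall _ _).of_isClosed_subset hS_closed hS_sub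
  have hS_ne : S.Nonempty := by
    refine ⟨Pi.single ⟨0, hn⟩ 1, ?_⟩
    simp [hS_def, dotProduct, Pi.single_apply]
  obtain ⟨x0, hx0S, hx0min⟩ := hS_cpt.exists_isMinOn hS_ne
    (((qf_continuous A).max (qf_continuous B)).continuousOn)
  set ε : ℝ := max (qf A x0) (qf B x0) with hε_def
  have hx0ne : x0 ≠ 0 := by
    intro h0
    rw [hS_def, Set.mem_setOf_eq, h0] at hx0S
    simp at hx0S
  have hε_pos : 0 < ε := h x0 hx0ne
  -- scale-invariance: max(qfA, qfB) ≥ ε ⟨x,x⟩ everywhere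
  have hscale : ∀ x : Fin n → ℝ, ε * (x ⬝ᵥ x) ≤ max (qf A x) (qf B x) := by
    intro x
    by_cases hx : x = 0
    · simp [hx, qf_zero]
    · have hxx : 0 < x ⬝ᵥ x := dp_self_pos hx
      set r : ℝ := Real.sqrt (x ⬝ᵥ x) with hr_def
      have hr_pos : 0 < r := Real.sqrt_pos.mpr hxx
      have hr_sq : r^2 = x ⬝ᵥ x := Real.sq_sqrt hxx.le
      set w : Fin n → ℝ := r⁻¹ • x with hw_def
      have hx_eq : x = r • w := by
        rw [hw_def, smul_smul, mul_inv_cancel₀ hr_pos.ne', one_smul]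
      have hwS : w ∈ S := by
        rw [hS_def, Set.mem_setOf_eq, hw_def]
        simp only [smul_dotProduct, dotProduct_smul, smul_eq_mul]
        field_simp
        rw [← hr_sq]
      have hmin := hx0min hwS
      simp only at hmin
      have hA_eq : qf A x = r^2 * qf A w := by rw [hx_eq, qf_smul]
      have hB_eq : qf B x = r^2 * qf B w := by rw [hx_eq, qf_smul]
      rw [hA_eq, hB_eq, ← hr_sq]
      have : max (r^2 * qf A w) (r^2 * qf B w) = r^2 * max (qf A w) (qf B w) := by
        rcases le_total (qf A w) (qf B w) with h' | h'
        · rw [max_eq_right h', max_eq_right (mul_le_mul_of_nonneg_left h' (sq_nonneg r))]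
        · rw [max_eq_left h', max_eq_left (mul_le_mul_of_nonneg_left h' (sq_nonneg r))]
      rw [this, mul_comm ε (r^2)]
      exact mul_le_mul_of_nonneg_left (le_trans hmin (le_refl _)) (sq_nonneg r)
  -- apply the nonstrict version to the shifted forms
  set A' : Matrix (Fin n) (Fin n) ℝ := A - ε • (1 : Matrix (Fin n) (Fin n) ℝ) with hA'_def
  set B' : Matrix (Fin n) (Fin n) ℝ := B - ε • (1 : Matrix (Fin n) (Fin n) ℝ) with hB'_def
  have hA'symm : A'.IsSymm := by
    rw [hA'_def, Matrix.IsSymm, transpose_sub, transpose_smul, transpose_one, hA.eq]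
  have hB'symm : B'.IsSymm := by
    rw [hB'_def, Matrix.IsSymm, transpose_sub, transpose_smul, transpose_one, hB.eq]
  have hqfA' : ∀ x, qf A' x = qf A x - ε * (x ⬝ᵥ x) := by
    intro x
    rw [hA'_def]
    simp only [qf, sub_mulVec, smul_mulVec, one_mulVec, dotProduct_sub, dotProduct_smul,
      smul_eq_mul]
  have hqfB' : ∀ x, qf B' x = qf B x - ε * (x ⬝ᵥ x) := by
    intro x
    rw [hB'_def]
    simp only [qf, sub_mulVec, smul_mulVec, one_mulVec, dotProduct_sub, dotProduct_smul,
      smul_eq_mul]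
  have hmax' : ∀ x : Fin n → ℝ, 0 ≤ max (qf A' x) (qf B' x) := by
    intro x
    rw [hqfA' x, hqfB' x]
    have : max (qf A x - ε * (x ⬝ᵥ x)) (qf B x - ε * (x ⬝ᵥ x))
        = max (qf A x) (qf B x) - ε * (x ⬝ᵥ x) := by
      rw [max_sub_sub_right]
    rw [this]
    linarith [hscale x]
  obtain ⟨l, hl, hlpos⟩ := yuan_nonstrict hA'symm hB'symm hmax'
  refine ⟨l, hl, fun x hx => ?_⟩
  have := hlpos x
  rw [hqfA' x, hqfB' x] at this
  have hxx : 0 < x ⬝ᵥ x := dp_self_pos hx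
  nlinarith

end SLemmaAux

/-- S-lemma: if `x̄ᵀ N x̄ > 0` for some `x̄`, then `xᵀ M x > 0` for all nonzero
`x` with `xᵀ N x ≥ 0` iff there exists `α ≥ 0` with `M - αN ≻ 0`. -/
theorem stmt15 {n : ℕ} (M N : Matrix (Fin n) (Fin n) ℝ)
    (hM : M.IsSymm) (hN : N.IsSymm)
    (hbar : ∃ xbar : Fin n → ℝ, 0 < xbar ⬝ᵥ (N *ᵥ xbar)) :
    (∀ x : Fin n → ℝ, x ≠ 0 → 0 ≤ x ⬝ᵥ (N *ᵥ x) → 0 < x ⬝ᵥ (M *ᵥ x)) ↔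
      (∃ α : ℝ, 0 ≤ α ∧ (M - α • N).PosDef) := by
  obtain ⟨xbar, hxbar⟩ := hbar
  have hxbar_ne : xbar ≠ 0 := by
    intro h0
    rw [h0] at hxbar
    simp at hxbar
  constructor
  · intro H
    -- apply strict Yuan's lemma to M and -N
    have hNneg : (-N).IsSymm := by rw [Matrix.IsSymm, transpose_neg, hN.eq]
    have hqfneg : ∀ x, qf (-N) x = - qf N x := by
      intro x; simp [qf, neg_mulVec]
    have hpos : ∀ x : Fin n → ℝ, x ≠ 0 → 0 < max (qf M x) (qf (-N) x) := by
      intro x hx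
      rcases le_or_gt 0 (qf N x) with h' | h'
      · exact lt_max_iff.mpr (Or.inl (H x hx h'))
      · refine lt_max_iff.mpr (Or.inr ?_)
        rw [hqfneg x]; linarith
    obtain ⟨l, hl, hkey⟩ := yuan_strict hM hNneg hpos
    have hl0 : l ≠ 0 := by
      intro h0
      have := hkey xbar hxbar_ne
      rw [h0, hqfneg xbar] at this
      simp only [zero_mul, sub_zero, one_mul, zero_add] at this
      have : qf N xbar = xbar ⬝ᵥ (N *ᵥ xbar) := rfl
      unfold qf at *
      linarith
    have hlpos : 0 < l := lt_of_le_of_ne hl.1 (Ne.symm hl0)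
    refine ⟨(1 - l) / l, div_nonneg (by linarith [hl.2]) hlpos.le, Matrix.posDef_iff_dotProduct_mulVec.mpr ⟨?_, ?_⟩⟩
    · -- Hermitian
      have : (M - ((1 - l) / l) • N).IsSymm := by
        rw [Matrix.IsSymm, transpose_sub, transpose_smul, hM.eq, hN.eq]
      exact this
    · intro x hx
      have hk := hkey x hx
      rw [hqfneg x] at hk
      have hval : star x ⬝ᵥ ((M - ((1 - l) / l) • N) *ᵥ x)
          = qf M x - ((1 - l) / l) * qf N x := by
        simp only [star_trivial, qf, sub_mulVec, smul_mulVec, dotProduct_sub,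
          dotProduct_smul, smul_eq_mul]
      rw [hval]
      rw [div_mul_eq_mul_div, sub_div' hl0, lt_div_iff₀ hlpos] at *
      nlinarith
  · rintro ⟨α, hα, hPD⟩ x hx hNx
    have := (Matrix.posDef_iff_dotProduct_mulVec.mp hPD).2 hx
    simp only [star_trivial, sub_mulVec, smul_mulVec, dotProduct_sub, dotProduct_smul,
      smul_eq_mul] at this
    nlinarith [mul_nonneg hα hNx]
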